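/- Softmax lower bound on maximizers: under the same setup, if additionally η ≥ (L + log(|A|/π(a)))/Δ for some L > 0 and a ∈ A*, then, with π̃(a) = π(a)/∑_{a'∈A*} π(a'), the softmax update satisfies π'(a) ≥ π̃(a)/(1 + π̃(a) e^{−L}). -/
import Mathlib


open Finset

attribute [local instance] Classical.propDecidable

/-- The set of maximizers `A* = argmax Q` of a function on a finite type. -/
noncomputable def argmaxSet {A : Type*} [Fintype A] (Q : A → ℝ) : Finset A :=
  Finset.univ.filter (fun a => ∀ a', Q a' ≤ Q a)

/-- Softmax lower bound on maximizers: with `A* = argmax Q`, gap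
`Δ = max Q − max_{a∉A*} Q > 0`, a fully supported distribution `π` and softmax update
`π'(a) = π(a)exp(ηQ(a))/∑_{a'} π(a')exp(ηQ(a'))`, if additionally
`η ≥ (L + log(|A|/π(a)))/Δ` for some `L > 0` and `a ∈ A*`, then, with
`π̃(a) = π(a)/∑_{a'∈A*} π(a')`, we have `π'(a) ≥ π̃(a)/(1 + π̃(a) e^{−L})`. -/
theorem softmax_maximizer_lower_bound {A : Type*} [Fintype A] [Nonempty A]
    (Q : A → ℝ) (pol : A → ℝ) (η L : ℝ) (hη : 0 < η) (hL : 0 < L)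
    (hpos : ∀ a, 0 < pol a) (hsum : ∑ a, pol a = 1)
    (hsub : (Finset.univ.filter (fun a => a ∉ argmaxSet Q)).Nonempty)
    (Δ : ℝ)
    (hΔ : Δ = Finset.univ.sup' Finset.univ_nonempty Q -
      (Finset.univ.filter (fun a => a ∉ argmaxSet Q)).sup' hsub Q)
    (hΔpos : 0 < Δ)
    (pol' : A → ℝ)
    (hupd : ∀ b, pol' b =
      pol b * Real.exp (η * Q b) / ∑ b', pol b' * Real.exp (η * Q b'))
    (a : A) (ha : a ∈ argmaxSet Q)
    (hstep : (L + Real.log ((Fintype.card A) / pol a)) / Δ ≤ η) :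
    (pol a / ∑ b ∈ argmaxSet Q, pol b) /
        (1 + (pol a / ∑ b ∈ argmaxSet Q, pol b) * Real.exp (-L)) ≤ pol' a := by
  have haQ : ∀ a', Q a' ≤ Q a := by
    simpa [argmaxSet, Finset.mem_filter] using ha
  set S := ∑ b ∈ argmaxSet Q, pol b with hSdef
  have hSpos : 0 < S := Finset.sum_pos (fun b _ => hpos b) ⟨a, ha⟩
  set D := ∑ b', pol b' * Real.exp (η * Q b') with hDdef
  have hDpos : 0 < D :=
    Finset.sum_pos (fun b _ => mul_pos (hpos b) (Real.exp_pos _)) Finset.univ_nonempty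
  have hsup : Finset.univ.sup' Finset.univ_nonempty Q = Q a :=
    le_antisymm (Finset.sup'_le _ _ (fun b _ => haQ b)) (Finset.le_sup' _ (Finset.mem_univ a))
  have hQb : ∀ b, b ∉ argmaxSet Q → Q b ≤ Q a - Δ := by
    intro b hb
    have h1 : Q b ≤ (Finset.univ.filter (fun a => a ∉ argmaxSet Q)).sup' hsub Q :=
      Finset.le_sup' _ (by simp [hb])
    rw [hsup] at hΔ
    linarith
  -- exponent bound
  have hcard : (1 : ℝ) ≤ (Fintype.card A : ℝ) := by exact_mod_cast Fintype.card_pos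
  have hηΔ : L + Real.log ((Fintype.card A) / pol a) ≤ η * Δ := by
    rw [div_le_iff₀ hΔpos] at hstep; linarith
  have hloglb : -Real.log (pol a) ≤ Real.log ((Fintype.card A) / pol a) := by
    have : Real.log (1 / pol a) ≤ Real.log ((Fintype.card A) / pol a) := by
      apply Real.log_le_log (by have := hpos a; positivity)
      gcongr
      exact (hpos a).le
    simpa [Real.log_div, Real.log_one] using this
  have hexp : Real.exp (-(η * Δ)) ≤ pol a * Real.exp (-L) := by
    have h2 : -(η * Δ) ≤ Real.log (pol a) - L := by linarith
    calc Real.exp (-(η * Δ)) ≤ Real.exp (Real.log (pol a) - L) := Real.exp_le_exp.2 h2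
      _ = pol a * Real.exp (-L) := by
          rw [Real.exp_sub, Real.exp_log (hpos a), Real.exp_neg]; ring
  -- split the denominator
  have hsplit : D = (∑ b ∈ argmaxSet Q, pol b * Real.exp (η * Q b)) +
      ∑ b ∈ Finset.univ.filter (fun b => b ∉ argmaxSet Q), pol b * Real.exp (η * Q b) := by
    rw [hDdef]
    rw [← Finset.sum_filter_add_sum_filter_not Finset.univ (fun b => b ∈ argmaxSet Q)]
    congr 1
    congr 1
    ext b
    simp [argmaxSet]
  have hargsum : (∑ b ∈ argmaxSet Q, pol b * Real.exp (η * Q b)) = S * Real.exp (η * Q a) := by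
    rw [hSdef, Finset.sum_mul]
    apply Finset.sum_congr rfl
    intro b hb
    have hb' : ∀ a', Q a' ≤ Q b := by simpa [argmaxSet, Finset.mem_filter] using hb
    have : Q b = Q a := le_antisymm (haQ b) (hb' a)
    rw [this]
  have hrest : (∑ b ∈ Finset.univ.filter (fun b => b ∉ argmaxSet Q),
      pol b * Real.exp (η * Q b)) ≤ Real.exp (η * Q a) * (pol a * Real.exp (-L)) := by
    have hb1 : (∑ b ∈ Finset.univ.filter (fun b => b ∉ argmaxSet Q),
        pol b * Real.exp (η * Q b)) ≤
        ∑ b ∈ Finset.univ.filter (fun b => b ∉ argmaxSet Q),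
        pol b * Real.exp (η * (Q a - Δ)) := by
      apply Finset.sum_le_sum
      intro b hb
      have hb' : b ∉ argmaxSet Q := (Finset.mem_filter.1 hb).2
      exact mul_le_mul_of_nonneg_left
        (Real.exp_le_exp.2 (mul_le_mul_of_nonneg_left (hQb b hb') hη.le)) (hpos b).le
    have hb2 : (∑ b ∈ Finset.univ.filter (fun b => b ∉ argmaxSet Q), pol b) ≤ 1 := by
      rw [← hsum]
      exact Finset.sum_le_sum_of_subset_of_nonneg (Finset.filter_subset _ _)
        (fun b _ _ => (hpos b).le)
    have hb3 : (∑ b ∈ Finset.univ.filter (fun b => b ∉ argmaxSet Q),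
        pol b * Real.exp (η * (Q a - Δ))) ≤ Real.exp (η * (Q a - Δ)) := by
      rw [← Finset.sum_mul]
      nlinarith [Real.exp_pos (η * (Q a - Δ))]
    have hb4 : Real.exp (η * (Q a - Δ)) ≤ Real.exp (η * Q a) * (pol a * Real.exp (-L)) := by
      have : Real.exp (η * (Q a - Δ)) = Real.exp (η * Q a) * Real.exp (-(η * Δ)) := by
        rw [← Real.exp_add]; ring_nf
      rw [this]
      exact mul_le_mul_of_nonneg_left hexp (Real.exp_pos _).le
    linarith
  have hDle : D ≤ Real.exp (η * Q a) * (S + pol a * Real.exp (-L)) := by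
    rw [hsplit, hargsum]; nlinarith [Real.exp_pos (η * Q a)]
  -- rewrite LHS
  have hLHS : (pol a / S) / (1 + (pol a / S) * Real.exp (-L)) =
      pol a / (S + pol a * Real.exp (-L)) := by
    field_simp
    try ring
  rw [hLHS, hupd a]
  rw [div_le_div_iff₀ (add_pos hSpos (mul_pos (hpos a) (Real.exp_pos _))) hDpos]
  have hpa := (hpos a).le
  nlinarith [Real.exp_pos (η * Q a), mul_le_mul_of_nonneg_left hDle hpa]
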